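/- Let K be a field, a, b, c ∈ K parameters, and (x, y, z) ∈ K³ with cx + a ≠ 0 and x² + a ≠ 0. Define y₁ = (x²z − x + az + c)/(cx + a) and z₁ = (cxy + x + ay − c)/(x² + a). Then (x²z₁ − x + a·z₁ + c)/(cx + a) = y and (cx·y₁ + x + a·y₁ − c)/(x² + a) = z; that is, applying the map R₁ twice returns the original point. -/

import Mathlib

/-- The map `R₁` of the polynomial-invariants example is an involution. -/
theorem stmt_5 {K : Type*} [Field K] (a b c x y z : K)
    (h1 : c * x + a ≠ 0) (h2 : x ^ 2 + a ≠ 0) :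
    let y1 := (x ^ 2 * z - x + a * z + c) / (c * x + a)
    let z1 := (c * x * y + x + a * y - c) / (x ^ 2 + a)
    (x ^ 2 * z1 - x + a * z1 + c) / (c * x + a) = y ∧
    (c * x * y1 + x + a * y1 - c) / (x ^ 2 + a) = z := by
  constructor
  · rw [div_eq_iff h1]; field_simp; ring
  · rw [div_eq_iff h2]; field_simp; ring
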